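/- Let 0 = k_0 < k_1 < … < k_p < k_{p+1} = n be integers, set n_j = k_j − k_{j−1} for j = 1,…,p+1, and let a_1 > a_2 > … > a_p > a_{p+1} = 0 be reals with a_1 < 2a_p. Let G be a simple graph on vertex set {1,…,n}. Then α(G) ≥ k_p if and only if there exists X ∈ Flag(k_1,…,k_p,n) with x_{ij} = 0 for all i ≠ j and x_{ii} + x_{jj} ≤ a_1 for every edge {i,j} of G. -/

import Mathlib

open Matrix

/-- The stability (independence) number of a simple graph on `Fin m`. -/
noncomputable def stabNum {m : ℕ} (G : SimpleGraph (Fin m)) : ℕ :=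
  sSup {r | ∃ s : Finset (Fin m), (∀ i ∈ s, ∀ j ∈ s, ¬ G.Adj i j) ∧ s.card = r}

lemma auxPermConj {n : ℕ} (c : Fin n → ℝ) (e : Equiv.Perm (Fin n)) :
    ∃ Q : Matrix (Fin n) (Fin n) ℝ, Qᵀ * Q = 1 ∧
      Matrix.diagonal (fun i => c (e i)) = Q * Matrix.diagonal c * Qᵀ := by
  classical
  refine ⟨(1 : Matrix (Fin n) (Fin n) ℝ).submatrix e id, ?_, ?_⟩
  · rw [transpose_submatrix, transpose_one]
    have h := Matrix.submatrix_mul_equiv (1 : Matrix (Fin n) (Fin n) ℝ)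
      (1 : Matrix (Fin n) (Fin n) ℝ) (id : Fin n → Fin n) e (id : Fin n → Fin n)
    rw [h, one_mul, submatrix_id_id]
  · have h1 := Matrix.submatrix_mul_equiv (1 : Matrix (Fin n) (Fin n) ℝ)
      (Matrix.diagonal c) (⇑e) (Equiv.refl (Fin n)) (id : Fin n → Fin n)
    have h2 := Matrix.submatrix_mul_equiv (Matrix.diagonal c)
      (1 : Matrix (Fin n) (Fin n) ℝ) (⇑e) (Equiv.refl (Fin n)) (⇑e)
    rw [transpose_submatrix, transpose_one]
    simp only [Equiv.coe_refl, submatrix_id_id] at h1 h2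
    rw [h1, one_mul, h2, mul_one]
    ext i j
    by_cases hij : i = j
    · subst hij; simp
    · rw [Matrix.submatrix_apply, Matrix.diagonal_apply_ne _ hij,
        Matrix.diagonal_apply_ne _ (fun h => hij (e.injective h))]

/-- LP feasibility over the flag manifold detects the stability number:
with `0 = k₀ < k₁ < ⋯ < k_p < k_{p+1} = n`, parameters
`a₁ > ⋯ > a_p > a_{p+1} = 0` with `a₁ < 2 a_p`, and `c` the step vector whose `i`-th
entry is `a_j` for `k_{j-1} ≤ i < k_j`, one has `α(G) ≥ k_p` iff there is
`X = Q diag(c) Qᵀ ∈ Flag(k₁,…,k_p,n)` with zero off-diagonal entries and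
`x_{ii} + x_{jj} ≤ a₁` on every edge. -/
theorem stmt6 (p n : ℕ) (hp : 0 < p)
    (k : Fin (p + 2) → ℕ) (hk0 : k 0 = 0) (hkn : k (Fin.last (p + 1)) = n)
    (hkmono : StrictMono k)
    (a : Fin (p + 1) → ℝ) (ha : StrictAnti a) (halast : a (Fin.last p) = 0)
    (ha2 : a 0 < 2 * a ⟨p - 1, by omega⟩)
    (c : Fin n → ℝ)
    (hc : ∀ (j : Fin (p + 1)) (i : Fin n),
      k j.castSucc ≤ (i : ℕ) → (i : ℕ) < k j.succ → c i = a j)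
    (G : SimpleGraph (Fin n)) :
    k ⟨p, by omega⟩ ≤ stabNum G ↔
      ∃ X : Matrix (Fin n) (Fin n) ℝ,
        (∃ Q : Matrix (Fin n) (Fin n) ℝ, Qᵀ * Q = 1 ∧
          X = Q * Matrix.diagonal c * Qᵀ) ∧
        (∀ i j : Fin n, i ≠ j → X i j = 0) ∧
        (∀ i j : Fin n, G.Adj i j → X i i + X j j ≤ a 0) := by
  classical
  set kp : ℕ := k ⟨p, by omega⟩ with hkp
  -- block decomposition
  have hblock : ∀ i : Fin n, ∃ j : Fin (p+1), k j.castSucc ≤ (i:ℕ) ∧ (i:ℕ) < k j.succ := by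
    intro i
    set F : Finset (Fin (p+2)) := Finset.univ.filter (fun j => k j ≤ (i:ℕ)) with hF
    have h0F : (0 : Fin (p+2)) ∈ F := by simp [hF, hk0]
    have hFne : F.Nonempty := ⟨0, h0F⟩
    have hj₀F : F.max' hFne ∈ F := F.max'_mem hFne
    have hj₀le : k (F.max' hFne) ≤ (i:ℕ) := by
      simpa [hF] using hj₀F
    have hin : (i : ℕ) < n := i.isLt
    have hj₀lt : ((F.max' hFne : Fin (p+2)) : ℕ) < p + 1 := by
      by_contra h
      have hlast : F.max' hFne = Fin.last (p+1) := by
        apply Fin.ext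
        have := (F.max' hFne).isLt
        simp only [Fin.val_last]
        omega
      rw [hlast, hkn] at hj₀le
      omega
    refine ⟨⟨(F.max' hFne : ℕ), hj₀lt⟩, ?_, ?_⟩
    · have : (⟨(F.max' hFne : ℕ), hj₀lt⟩ : Fin (p+1)).castSucc = F.max' hFne := by
        apply Fin.ext; simp
      rw [this]; exact hj₀le
    · by_contra h
      push_neg at h
      have hmem : (⟨(F.max' hFne : ℕ), hj₀lt⟩ : Fin (p+1)).succ ∈ F := by
        simp only [hF, Finset.mem_filter, Finset.mem_univ, true_and]
        exact h
      have hle := F.le_max' _ hmem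
      rw [Fin.le_def] at hle
      simp at hle
  -- c bounded above by a 0
  have hcle : ∀ i : Fin n, c i ≤ a 0 := by
    intro i
    obtain ⟨j, h1, h2⟩ := hblock i
    rw [hc j i h1 h2]
    exact ha.antitone (Fin.zero_le j)
  -- c at least a_{p-1} below kp
  have hcpos : ∀ i : Fin n, (i:ℕ) < kp → a ⟨p - 1, by omega⟩ ≤ c i := by
    intro i hi
    obtain ⟨j, h1, h2⟩ := hblock i
    rw [hc j i h1 h2]
    apply ha.antitone
    have hlt : k j.castSucc < k ⟨p, by omega⟩ := lt_of_le_of_lt h1 hi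
    have hj : (j : ℕ) < p := by
      have := hkmono.lt_iff_lt.mp hlt
      simpa [Fin.lt_def] using this
    rw [Fin.le_def]
    simp
    omega
  -- c is zero at and above kp
  have hc0 : ∀ i : Fin n, kp ≤ (i:ℕ) → c i = 0 := by
    intro i hi
    obtain ⟨j, h1, h2⟩ := hblock i
    rw [hc j i h1 h2]
    have hlt : k ⟨p, by omega⟩ < k j.succ := lt_of_le_of_lt hi h2
    have hj : p < (j : ℕ) + 1 := by
      have := hkmono.lt_iff_lt.mp hlt
      simpa [Fin.lt_def] using this
    have hjp : j = Fin.last p := by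
      apply Fin.ext
      have := j.isLt
      simp only [Fin.val_last]
      omega
    rw [hjp, halast]
  have hapos : 0 < a ⟨p - 1, by omega⟩ := by
    rw [← halast]
    apply ha
    rw [Fin.lt_def]
    simp only [Fin.val_last]
    omega
  have hcne : ∀ i : Fin n, c i ≠ 0 ↔ (i:ℕ) < kp := by
    intro i
    constructor
    · intro h
      by_contra hlt
      exact h (hc0 i (by omega))
    · intro h
      have := hcpos i h
      linarith
  have hkpn : kp ≤ n := by
    rw [hkp, ← hkn]
    exact hkmono.monotone (by rw [Fin.le_def]; simp)
  have hcard : (Finset.univ.filter (fun i : Fin n => (i:ℕ) < kp)).card = kp := by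
    have : Finset.univ.filter (fun i : Fin n => (i:ℕ) < kp)
        = Finset.univ.map (Fin.castLEEmb hkpn) := by
      ext i
      simp only [Finset.mem_filter, Finset.mem_univ, true_and, Finset.mem_map]
      constructor
      · intro h
        exact ⟨⟨(i:ℕ), h⟩, by apply Fin.ext; simp [Fin.castLEEmb]⟩
      · rintro ⟨x, rfl⟩
        simpa [Fin.castLEEmb] using x.isLt
    rw [this, Finset.card_map, Finset.card_univ, Fintype.card_fin]
  have hbdd : BddAbove {r | ∃ s : Finset (Fin n),
      (∀ i ∈ s, ∀ j ∈ s, ¬ G.Adj i j) ∧ s.card = r} := by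
    refine ⟨n, ?_⟩
    rintro r ⟨s, -, rfl⟩
    simpa using Finset.card_le_univ s
  constructor
  · -- forward
    intro hstab
    have hne : Set.Nonempty {r | ∃ s : Finset (Fin n),
        (∀ i ∈ s, ∀ j ∈ s, ¬ G.Adj i j) ∧ s.card = r} := ⟨0, ∅, by simp, by simp⟩
    obtain ⟨s, hs, hcards⟩ := Nat.sSup_mem hne hbdd
    have hstab' : kp ≤ s.card := by
      rw [hcards]; exact hstab
    obtain ⟨t, hts, hcardt⟩ := Finset.exists_subset_card_eq hstab'
    have ht : ∀ i ∈ t, ∀ j ∈ t, ¬ G.Adj i j := fun i hi j hj => hs i (hts hi) j (hts hj)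
    have hq1 : Fintype.card {x : Fin n // x ∈ t} = Fintype.card {x : Fin n // (x:ℕ) < kp} := by
      rw [Fintype.card_coe, Fintype.card_subtype, hcard, hcardt]
    have hq2 : Fintype.card {x : Fin n // ¬ x ∈ t}
        = Fintype.card {x : Fin n // ¬ (x:ℕ) < kp} := by
      rw [Fintype.card_subtype_compl, Fintype.card_subtype_compl, hq1]
    set e : Equiv.Perm (Fin n) :=
      (Equiv.sumCompl (· ∈ t)).symm.trans
        (((Fintype.equivOfCardEq hq1).sumCongr (Fintype.equivOfCardEq hq2)).trans
          (Equiv.sumCompl (fun x : Fin n => (x:ℕ) < kp))) with he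
    have he1 : ∀ x : Fin n, x ∈ t → ((e x : Fin n) : ℕ) < kp := by
      intro x hx
      have : e x = ↑(Fintype.equivOfCardEq hq1 ⟨x, hx⟩) := by
        rw [he]
        simp only [Equiv.trans_apply, Equiv.sumCompl_symm_apply_of_pos hx,
          Equiv.sumCongr_apply, Sum.map_inl, Equiv.sumCompl_apply_inl]
      rw [this]
      exact (Fintype.equivOfCardEq hq1 ⟨x, hx⟩).2
    have he2 : ∀ x : Fin n, x ∉ t → ¬ ((e x : Fin n) : ℕ) < kp := by
      intro x hx
      have : e x = ↑(Fintype.equivOfCardEq hq2 ⟨x, hx⟩) := by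
        rw [he]
        simp only [Equiv.trans_apply, Equiv.sumCompl_symm_apply_of_neg hx,
          Equiv.sumCongr_apply, Sum.map_inr, Equiv.sumCompl_apply_inr]
      rw [this]
      exact (Fintype.equivOfCardEq hq2 ⟨x, hx⟩).2
    obtain ⟨Q, hQ, hQX⟩ := auxPermConj c e
    refine ⟨Matrix.diagonal (fun i => c (e i)), ⟨Q, hQ, hQX⟩, ?_, ?_⟩
    · intro i j hij
      exact Matrix.diagonal_apply_ne _ hij
    · intro i j hadj
      rw [Matrix.diagonal_apply_eq, Matrix.diagonal_apply_eq]
      by_cases hi : i ∈ t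
      · have hj : j ∉ t := fun hj => ht i hi j hj hadj
        rw [hc0 (e j) (not_lt.mp (he2 j hj))]
        have := hcle (e i)
        linarith
      · rw [hc0 (e i) (not_lt.mp (he2 i hi))]
        have := hcle (e j)
        linarith
  · -- backward
    rintro ⟨X, ⟨Q, hQ, hQX⟩, hoff, hedge⟩
    set d : Fin n → ℝ := fun i => X i i with hd
    have hXd : X = Matrix.diagonal d := by
      ext i j
      by_cases hij : i = j
      · subst hij; simp [hd]
      · rw [Matrix.diagonal_apply_ne _ hij]
        exact hoff i j hij
    have hQQ : Q * Qᵀ = 1 := mul_eq_one_comm.mp hQ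
    have hdQ : Q.det * Qᵀ.det = 1 := by rw [← Matrix.det_mul, hQQ, Matrix.det_one]
    have hdet : ∀ t : ℝ, (∏ i, (t - d i)) = ∏ i, (t - c i) := by
      intro t
      have h1 : t • (1 : Matrix (Fin n) (Fin n) ℝ) - X
          = Q * (t • (1 : Matrix (Fin n) (Fin n) ℝ) - Matrix.diagonal c) * Qᵀ := by
        rw [hQX, Matrix.mul_sub, Matrix.sub_mul]
        congr 1
        rw [Matrix.mul_smul, mul_one, Matrix.smul_mul, hQQ]
      have h2 := congrArg Matrix.det h1
      rw [Matrix.det_mul, Matrix.det_mul] at h2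
      have h3 : (t • (1 : Matrix (Fin n) (Fin n) ℝ) - X).det = ∏ i, (t - d i) := by
        rw [hXd, smul_one_eq_diagonal, Matrix.diagonal_sub, Matrix.det_diagonal]
      have h4 : (t • (1 : Matrix (Fin n) (Fin n) ℝ) - Matrix.diagonal c).det
          = ∏ i, (t - c i) := by
        rw [smul_one_eq_diagonal, Matrix.diagonal_sub, Matrix.det_diagonal]
      rw [h3, h4] at h2
      rw [h2, mul_comm Q.det, mul_assoc, hdQ, mul_one]
    have hpoly : (∏ i, (Polynomial.X - Polynomial.C (d i)))
        = ∏ i, (Polynomial.X - Polynomial.C (c i)) := by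
      apply Polynomial.funext
      intro r
      rw [Polynomial.eval_prod, Polynomial.eval_prod]
      simp only [Polynomial.eval_sub, Polynomial.eval_X, Polynomial.eval_C]
      exact hdet r
    have hprodform : ∀ f : Fin n → ℝ, ((Multiset.map f Finset.univ.val).map
        (fun r => Polynomial.X - Polynomial.C r)).prod
        = ∏ i, (Polynomial.X - Polynomial.C (f i)) := by
      intro f
      rw [Multiset.map_map, ← Finset.prod_eq_multiset_prod]
      rfl
    have hms : Multiset.map d Finset.univ.val = Multiset.map c Finset.univ.val := by
      calc Multiset.map d Finset.univ.val
          = ((Multiset.map d Finset.univ.val).map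
              (fun r => Polynomial.X - Polynomial.C r)).prod.roots :=
            (Polynomial.roots_multiset_prod_X_sub_C _).symm
        _ = ((Multiset.map c Finset.univ.val).map
              (fun r => Polynomial.X - Polynomial.C r)).prod.roots := by
            rw [hprodform, hprodform, hpoly]
        _ = Multiset.map c Finset.univ.val := Polynomial.roots_multiset_prod_X_sub_C _
    have hdc : ∀ i : Fin n, ∃ m : Fin n, c m = d i := by
      intro i
      have hmem : d i ∈ Multiset.map c Finset.univ.val := by
        rw [← hms]
        exact Multiset.mem_map_of_mem d (Finset.mem_val.mpr (Finset.mem_univ i))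
      obtain ⟨m, -, hm⟩ := Multiset.mem_map.mp hmem
      exact ⟨m, hm⟩
    set S : Finset (Fin n) := Finset.univ.filter (fun i => d i ≠ 0) with hS
    have hfiltcard : ∀ f : Fin n → ℝ,
        (Multiset.filter (fun x : ℝ => x ≠ 0) (Multiset.map f Finset.univ.val)).card
          = (Finset.univ.filter (fun i : Fin n => f i ≠ 0)).card := by
      intro f
      rw [Multiset.filter_map, Multiset.card_map]
      have : Multiset.filter ((fun x : ℝ => x ≠ 0) ∘ f) Finset.univ.val
          = (Finset.univ.filter (fun i : Fin n => f i ≠ 0)).val := by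
        rw [Finset.filter_val]
        exact Multiset.filter_congr (fun x _ => by simp [Function.comp])
      rw [this]
      rfl
    have hcount : S.card = kp := by
      have h1 := hfiltcard d
      have h2 := hfiltcard c
      rw [hms, h2] at h1
      have h3 : Finset.univ.filter (fun i : Fin n => c i ≠ 0)
          = Finset.univ.filter (fun i : Fin n => (i:ℕ) < kp) :=
        Finset.filter_congr (fun i _ => by simpa using hcne i)
      rw [h3, hcard] at h1
      rw [hS, ← h1]
    have hSstable : ∀ i ∈ S, ∀ j ∈ S, ¬ G.Adj i j := by
      intro i hi j hj hadj
      rw [hS, Finset.mem_filter] at hi hj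
      obtain ⟨m1, hm1⟩ := hdc i
      obtain ⟨m2, hm2⟩ := hdc j
      have h1 : a ⟨p - 1, by omega⟩ ≤ d i := by
        rw [← hm1]
        exact hcpos m1 ((hcne m1).mp (by rw [hm1]; exact hi.2))
      have h2 : a ⟨p - 1, by omega⟩ ≤ d j := by
        rw [← hm2]
        exact hcpos m2 ((hcne m2).mp (by rw [hm2]; exact hj.2))
      have h3 : d i + d j ≤ a 0 := hedge i j hadj
      linarith
    exact le_csSup hbdd ⟨S, hSstable, hcount⟩
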